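/- arXiv:math/0205204 — 4 statements merged into one kernel-verified Lean document; each statement's English description precedes it below -/
import Mathlib

section
/- Let B and B̃ be complex Banach spaces, let i : B̃ → B be a compact continuous linear map, let V ⊆ B be an open set, let R̃ : V → B̃ be Fréchet differentiable, and set R := i ∘ R̃ : V → B. Let S ⊆ B × B be a set whose first projection is contained in V, and for f ∈ B write E_f := {v ∈ B : (f, v) ∈ S}. Assume: (1) vector bundle structure: if (f, v₁) ∈ S and (f, v₂) ∈ S then (f, α·v₁ + v₂) ∈ S for every α ∈ ℂ; (2) semicontinuity: S is closed in B × B, i.e. if (fₙ, vₙ) ∈ S and (fₙ, vₙ) → (f, v) then (f, v) ∈ S; (3) invariance: if (f, v) ∈ S then (R f, DR_f · v) ∈ S, where DR_f denotes the Fréchet derivative of R at f; (4) compactness: the set {(R̃ f, DR̃_f · v) : (f, v) ∈ S, ‖v‖ ≤ 1} is bounded in B̃ × B̃; (5) uniform continuity: there exists C > 0 such that for every f with E_f ≠ ∅ and every n ∈ ℕ, sup{‖D(Rⁿ)_f · v‖ : v ∈ E_f, ‖v‖ ≤ 1} ≤ C, where D(Rⁿ)_f is the Fréchet derivative at f of the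 n-th iterate of R (well defined on the first projection of S by invariance); (6) pointwise decay: for every (f, v) ∈ S, ‖D(Rⁿ)_f · v‖ → 0 as n → ∞. Then there exist λ < 1 and N ∈ ℕ such that for every f with E_f ≠ ∅, sup{‖D(R^N)_f · v‖ : v ∈ E_f, ‖v‖ ≤ 1} ≤ λ. -/
open scoped Topology

/-- The derivative of the `n`-th iterate of `R` at `f`, given by the chain rule:
`D(Rⁿ)_f = DR_{R^{n-1}f} ∘ ⋯ ∘ DR_f`, where `DR g` is the derivative of `R` at `g`. -/
noncomputable def iterDeriv {B : Type*} [NormedAddCommGroup B] [NormedSpace ℂ B]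
    (R : B → B) (DR : B → B →L[ℂ] B) : ℕ → B → (B →L[ℂ] B)
  | 0, _ => ContinuousLinearMap.id ℂ B
  | n + 1, f => (DR (R^[n] f)).comp (iterDeriv R DR n f)

open Metric
/- ===== auxiliary lemmas ===== -/

section
variable {B Bt : Type*} [NormedAddCommGroup B] [NormedSpace ℂ B]
    [NormedAddCommGroup Bt] [NormedSpace ℂ Bt]

lemma slice_hasDerivAt {Rt : B → Bt} {D : B →L[ℂ] Bt} {x : B} (u : B) (z₀ : ℂ)
    (h : HasFDerivAt Rt D (x + z₀ • u)) :
    HasDerivAt (fun z : ℂ => Rt (x + z • u)) (D u) z₀ := by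
  have haff : HasDerivAt (fun z : ℂ => x + z • u) u z₀ := by
    simpa using ((hasDerivAt_id z₀).smul_const u).const_add x
  exact h.comp_hasDerivAt z₀ haff

lemma slice_bound {V : Set B} {Rt : B → Bt} {DRt : B → B →L[ℂ] Bt}
    (hdiff : ∀ f ∈ V, HasFDerivAt Rt (DRt f) f)
    {x u : B} {ρ M : ℝ} (hρ : 0 < ρ)
    (hmem : ∀ z : ℂ, ‖z‖ ≤ ρ → x + z • u ∈ V)
    (hbound : ∀ z : ℂ, ‖z‖ = ρ → ‖Rt (x + z • u)‖ ≤ M) :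
    ‖DRt x u‖ ≤ M / ρ := by
  set g : ℂ → Bt := fun z => Rt (x + z • u) with hg
  have hx : x ∈ V := by simpa using hmem 0 (by simp [hρ.le])
  have hder : HasDerivAt g (DRt x u) 0 :=
    slice_hasDerivAt u 0 (by simpa using hdiff x hx)
  have hdiffOn : DifferentiableOn ℂ g (closedBall (0:ℂ) ρ) := by
    intro z hz
    have hz' : ‖z‖ ≤ ρ := by simpa using mem_closedBall_zero_iff.mp hz
    exact (slice_hasDerivAt u z (hdiff _ (hmem z hz'))).differentiableAt.differentiableWithinAt
  have hdc : DiffContOnCl ℂ g (ball (0:ℂ) ρ) :=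
    ⟨hdiffOn.mono ball_subset_closedBall,
      hdiffOn.continuousOn.mono (by simp [closure_ball (0:ℂ) hρ.ne'])⟩
  have := Complex.norm_deriv_le_of_forall_mem_sphere_norm_le hρ hdc (fun z hz => by
    have hz' : ‖z‖ = ρ := by simpa using mem_sphere_zero_iff_norm.mp hz
    exact hbound z hz')
  rwa [hder.deriv] at this

lemma op_le (T : B →L[ℂ] Bt) {c : ℝ} (hc : 0 ≤ c) (h : ∀ u : B, ‖u‖ ≤ 1 → ‖T u‖ ≤ c) :
    ‖T‖ ≤ c := by
  apply T.opNorm_le_bound' hc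
  intro u hu0
  have hnu : (0:ℝ) < ‖u‖ := lt_of_le_of_ne (norm_nonneg u) (Ne.symm hu0)
  have h1 : ‖((‖u‖⁻¹ : ℝ) : ℂ) • u‖ ≤ 1 := by
    rw [norm_smul]
    simp [abs_of_nonneg (inv_nonneg.mpr hnu.le), inv_mul_cancel₀ hnu.ne']
  have := h _ h1
  rw [map_smul, norm_smul] at this
  simp only [Complex.norm_real, Real.norm_eq_abs, abs_of_nonneg (inv_nonneg.mpr hnu.le)] at this
  calc ‖T u‖ = ‖u‖ * (‖u‖⁻¹ * ‖T u‖) := by field_simp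
  _ ≤ ‖u‖ * c := by exact mul_le_mul_of_nonneg_left this hnu.le
  _ = c * ‖u‖ := mul_comm _ _

/-- Goursat-type: complex Fréchet differentiability on an open set implies continuity of the
derivative map. -/
lemma fderiv_continuousAt_of_differentiable {V : Set B} (hV : IsOpen V)
    {Rt : B → Bt} {DRt : B → B →L[ℂ] Bt}
    (hdiff : ∀ f ∈ V, HasFDerivAt Rt (DRt f) f) {f₀ : B} (hf₀ : f₀ ∈ V) :
    ContinuousAt DRt f₀ := by
  obtain ⟨δ₁, hδ₁, hV1⟩ : ∃ δ₁ > 0, ball f₀ δ₁ ⊆ V := Metric.isOpen_iff.mp hV f₀ hf₀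
  set M : ℝ := ‖Rt f₀‖ + 1 with hMdef
  have hMpos : 0 < M := by positivity
  have hev : ∀ᶠ x in nhds f₀, ‖Rt x‖ < M :=
    ((hdiff f₀ hf₀).continuousAt.norm).eventually_lt_const (by simp [hMdef])
  obtain ⟨δ₂, hδ₂, hM2⟩ := Metric.eventually_nhds_iff_ball.mp hev
  set δ : ℝ := min δ₁ δ₂ with hδdef
  have hδ : 0 < δ := lt_min hδ₁ hδ₂
  have hballV : ball f₀ δ ⊆ V := (ball_subset_ball (min_le_left _ _)).trans hV1
  have hMb : ∀ x ∈ ball f₀ δ, ‖Rt x‖ ≤ M := fun x hx =>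
    (hM2 x (ball_subset_ball (min_le_right _ _) hx)).le
  set L : ℝ := M / (δ/2) with hLdef
  have hLpos : 0 < L := by positivity
  -- derivative bound on ball f₀ (δ/4)
  have hDb : ∀ x ∈ ball f₀ (δ/4), ‖DRt x‖ ≤ L := by
    intro x hx
    refine op_le _ hLpos.le fun u hu => ?_
    have hmem : ∀ z : ℂ, ‖z‖ ≤ δ/2 → x + z • u ∈ ball f₀ δ := by
      intro z hz
      have h1 : ‖x + z • u - f₀‖ ≤ ‖x - f₀‖ + ‖z‖ * ‖u‖ := by
        calc ‖x + z • u - f₀‖ = ‖(x - f₀) + z • u‖ := by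
              rw [show x + z • u - f₀ = (x - f₀) + z • u by abel]
        _ ≤ ‖x - f₀‖ + ‖z • u‖ := norm_add_le _ _
        _ = ‖x - f₀‖ + ‖z‖ * ‖u‖ := by rw [norm_smul]
      have hx' : ‖x - f₀‖ < δ/4 := by simpa [dist_eq_norm] using hx
      have hzu : ‖z‖ * ‖u‖ ≤ δ/2 := by
        calc ‖z‖ * ‖u‖ ≤ (δ/2) * 1 := mul_le_mul hz hu (norm_nonneg _) (by positivity)
        _ = δ/2 := mul_one _
      have : ‖x + z • u - f₀‖ < δ := by linarith
      exact mem_ball_iff_norm.mpr this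
    exact slice_bound (fun f hf => hdiff f (hballV hf)) (by positivity)
      hmem (fun z hz => hMb _ (hmem z hz.le))
  -- Lipschitz bound for Rt on ball f₀ (δ/4)
  have hlip : ∀ x ∈ ball f₀ (δ/4), ∀ y ∈ ball f₀ (δ/4), ‖Rt y - Rt x‖ ≤ L * ‖y - x‖ := by
    intro x hx y hy
    have hconv : Convex ℝ (ball f₀ (δ/4)) := convex_ball _ _
    have hsub : ball f₀ (δ/4) ⊆ V := fun w hw => hballV (ball_subset_ball (by linarith) hw)
    refine hconv.norm_image_sub_le_of_norm_hasFDerivWithin_le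
      (f' := fun w => (DRt w).restrictScalars ℝ)
      (fun w hw => ((hdiff w (hsub hw)).restrictScalars ℝ).hasFDerivWithinAt)
      (fun w hw => by rw [ContinuousLinearMap.norm_restrictScalars]; exact hDb w hw) hx hy
  -- Lipschitz bound for DRt on ball f₀ (δ/8)
  set K : ℝ := L / (δ/16) with hKdef
  have hKpos : 0 < K := by positivity
  have hKlip : ∀ x ∈ ball f₀ (δ/8), ∀ y ∈ ball f₀ (δ/8),
      ‖DRt x - DRt y‖ ≤ K * ‖y - x‖ := by
    intro x hx y hy
    set c : B := y - x with hcdef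
    set W : Set B := {w : B | w ∈ ball f₀ (δ/4) ∧ w + c ∈ ball f₀ (δ/4)} with hWdef
    have hWV : ∀ w ∈ W, w ∈ V ∧ w + c ∈ V := fun w hw =>
      ⟨hballV (ball_subset_ball (by linarith) hw.1),
       hballV (ball_subset_ball (by linarith) hw.2)⟩
    set F : B → Bt := fun w => Rt w - Rt (w + c) with hFdef
    set DF : B → B →L[ℂ] Bt := fun w => DRt w - DRt (w + c) with hDFdef
    have hdiffF : ∀ w ∈ W, HasFDerivAt F (DF w) w := by
      intro w hw
      have h2 : HasFDerivAt (fun w : B => Rt (w + c)) (DRt (w + c)) w := by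
        have := (hdiff _ (hWV w hw).2).comp w ((hasFDerivAt_id w).add_const c)
        simpa [Function.comp_def] using this
      exact (hdiff _ (hWV w hw).1).sub h2
    refine op_le _ (by positivity) fun u hu => ?_
    have hmem : ∀ z : ℂ, ‖z‖ ≤ δ/16 → x + z • u ∈ W := by
      intro z hz
      have hb : ∀ a : B, a ∈ ball f₀ (δ/8) → a + z • u ∈ ball f₀ (δ/4) := by
        intro a ha
        have h1 : ‖a + z • u - f₀‖ ≤ ‖a - f₀‖ + ‖z‖ * ‖u‖ := by
          calc ‖a + z • u - f₀‖ = ‖(a - f₀) + z • u‖ := by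
                rw [show a + z • u - f₀ = (a - f₀) + z • u by abel]
          _ ≤ ‖a - f₀‖ + ‖z • u‖ := norm_add_le _ _
          _ = ‖a - f₀‖ + ‖z‖ * ‖u‖ := by rw [norm_smul]
        have ha' : ‖a - f₀‖ < δ/8 := by simpa [dist_eq_norm] using ha
        have hzu : ‖z‖ * ‖u‖ ≤ δ/16 := by
          calc ‖z‖ * ‖u‖ ≤ (δ/16) * 1 := mul_le_mul hz hu (norm_nonneg _) (by positivity)
          _ = δ/16 := mul_one _
        exact mem_ball_iff_norm.mpr (by linarith)
      constructor
      · exact hb x hx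
      · have := hb y hy
        have heq : x + z • u + c = y + z • u := by rw [hcdef]; abel
        rwa [heq]
    have hbound : ∀ z : ℂ, ‖z‖ = δ/16 → ‖F (x + z • u)‖ ≤ L * ‖c‖ := by
      intro z hz
      have hm := hmem z hz.le
      have heq : x + z • u + c = y + z • u := by rw [hcdef]; abel
      have h' := hlip _ hm.2 _ hm.1
      rw [show x + z • u - (x + z • u + c) = -c by abel, norm_neg] at h'
      exact h'
    have := slice_bound hdiffF (x := x) (u := u) (ρ := δ/16) (M := L * ‖c‖)
      (by positivity) hmem hbound
    have heval : DF x u = (DRt x - DRt y) u := by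
      simp [hDFdef, hcdef, show x + (y - x) = y by abel]
    rw [heval] at this
    calc ‖(DRt x - DRt y) u‖ ≤ L * ‖c‖ / (δ/16) := this
    _ = K * ‖y - x‖ := by rw [hKdef, hcdef]; ring
  -- conclude continuity
  have hball_nhds : ball f₀ (δ/8) ∈ nhds f₀ := ball_mem_nhds _ (by positivity)
  have hsq : Filter.Tendsto (fun x => ‖DRt x - DRt f₀‖) (nhds f₀) (nhds 0) := by
    apply squeeze_zero' (Filter.Eventually.of_forall fun _ => norm_nonneg _)
    · filter_upwards [hball_nhds] with x hx
      exact hKlip x hx f₀ (mem_ball_self (by positivity))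
    · have : Filter.Tendsto (fun x : B => K * ‖f₀ - x‖) (nhds f₀) (nhds (K * ‖f₀ - f₀‖)) :=
        (continuous_const.mul ((continuous_const.sub continuous_id).norm)).tendsto f₀
      simpa using this
  rw [ContinuousAt, tendsto_iff_norm_sub_tendsto_zero]
  exact hsq
end



section
variable {B : Type*} [NormedAddCommGroup B] [NormedSpace ℂ B]
    (R : B → B) (DR : B → B →L[ℂ] B)

lemma iterDeriv_add (m n : ℕ) (f v : B) :
    iterDeriv R DR (m + n) f v = iterDeriv R DR n (R^[m] f) (iterDeriv R DR m f v) := by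
  induction n with
  | zero => simp [iterDeriv]
  | succ n ih =>
    show DR (R^[m + n] f) (iterDeriv R DR (m + n) f v)
      = DR (R^[n] (R^[m] f)) (iterDeriv R DR n (R^[m] f) (iterDeriv R DR m f v))
    rw [ih, Nat.add_comm m n, Function.iterate_add_apply]
end

theorem stmt0
    {B Bt : Type*}
    [NormedAddCommGroup B] [NormedSpace ℂ B] [CompleteSpace B]
    [NormedAddCommGroup Bt] [NormedSpace ℂ Bt] [CompleteSpace Bt]
    -- `i : B̃ → B` is a compact continuous linear map
    (i : Bt →L[ℂ] B) (hi : IsCompactOperator i)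
    -- `V ⊆ B` is open and `R̃ : B → B̃` is Fréchet differentiable, with derivative `DRt f` at `f`
    (V : Set B) (hV : IsOpen V)
    (Rt : B → Bt) (DRt : B → B →L[ℂ] Bt)
    (hdiff : ∀ f ∈ V, HasFDerivAt Rt (DRt f) f)
    -- `R := i ∘ R̃`, with derivative `DR f = i ∘ DRt f` at `f`
    (R : B → B) (hR : ∀ f, R f = i (Rt f))
    (DR : B → B →L[ℂ] B) (hDR : ∀ f, DR f = i.comp (DRt f))
    -- `S ⊆ B × B`, with first projection contained in `V`
    (S : Set (B × B)) (hSV : ∀ p ∈ S, p.1 ∈ V)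
    -- (1) vector bundle structure
    (h1 : ∀ f v₁ v₂, (f, v₁) ∈ S → (f, v₂) ∈ S → ∀ α : ℂ, (f, α • v₁ + v₂) ∈ S)
    -- (2) semicontinuity: `S` is closed
    (h2 : IsClosed S)
    -- (3) invariance
    (h3 : ∀ f v, (f, v) ∈ S → (R f, DR f v) ∈ S)
    -- (4) compactness
    (h4 : Bornology.IsBounded
      {p : Bt × Bt | ∃ f v, (f, v) ∈ S ∧ ‖v‖ ≤ 1 ∧ p = (Rt f, DRt f v)})
    -- (5) uniform continuity
    (h5 : ∃ C > (0 : ℝ), ∀ f : B, (∃ v, (f, v) ∈ S) → ∀ n : ℕ, ∀ v : B,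
      (f, v) ∈ S → ‖v‖ ≤ 1 → ‖iterDeriv R DR n f v‖ ≤ C)
    -- (6) pointwise decay
    (h6 : ∀ f v, (f, v) ∈ S →
      Filter.Tendsto (fun n : ℕ => ‖iterDeriv R DR n f v‖) Filter.atTop (𝓝 0)) :
    -- conclusion: uniform contraction of some iterate on the fibers of `S`
    ∃ (lam : ℝ) (N : ℕ), lam < 1 ∧ ∀ f : B, (∃ v, (f, v) ∈ S) → ∀ v : B,
      (f, v) ∈ S → ‖v‖ ≤ 1 → ‖iterDeriv R DR N f v‖ ≤ lam := by
  classical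
  obtain ⟨C, hCpos, hC⟩ := h5
  -- basic fiber structure
  have hzero : ∀ f v, (f, v) ∈ S → (f, (0 : B)) ∈ S := by
    intro f v h
    have := h1 f v v h h (-1)
    simpa using this
  have hsmul : ∀ f v (α : ℂ), (f, v) ∈ S → (f, α • v) ∈ S := by
    intro f v α h
    have := h1 f v 0 h (hzero f v h) α
    simpa using this
  -- scaled uniform bound
  have hC' : ∀ n f v, (f, v) ∈ S → ‖iterDeriv R DR n f v‖ ≤ C * ‖v‖ := by
    intro n f v hfv
    rcases eq_or_ne v 0 with rfl | hv
    · simp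
    · have hv' : (0:ℝ) < ‖v‖ := norm_pos_iff.mpr hv
      have h1' := hsmul f v ((‖v‖⁻¹ : ℝ) : ℂ) hfv
      have hn : ‖((‖v‖⁻¹ : ℝ) : ℂ) • v‖ ≤ 1 := by
        rw [norm_smul]
        simp [abs_of_nonneg (inv_nonneg.mpr hv'.le), inv_mul_cancel₀ hv'.ne']
      have hb := hC f ⟨v, hfv⟩ n _ h1' hn
      rw [map_smul, norm_smul] at hb
      simp only [Complex.norm_real, Real.norm_eq_abs,
        abs_of_nonneg (inv_nonneg.mpr hv'.le)] at hb
      calc ‖iterDeriv R DR n f v‖ = ‖v‖ * (‖v‖⁻¹ * ‖iterDeriv R DR n f v‖) := by field_simp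
      _ ≤ ‖v‖ * C := mul_le_mul_of_nonneg_left hb hv'.le
      _ = C * ‖v‖ := mul_comm _ _
  -- invariance of iterates
  have hmemIter : ∀ (n : ℕ) f v, (f, v) ∈ S → (R^[n] f, iterDeriv R DR n f v) ∈ S := by
    intro n
    induction n with
    | zero => intro f v h; simpa [iterDeriv] using h
    | succ n ih =>
      intro f v h
      have := h3 _ _ (ih f v h)
      rw [Function.iterate_succ_apply']
      exact this
  -- quasi-monotonicity
  have hquasi : ∀ f v, (f, v) ∈ S → ∀ m n : ℕ,
      ‖iterDeriv R DR (m + n) f v‖ ≤ C * ‖iterDeriv R DR m f v‖ := by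
    intro f v h m n
    rw [iterDeriv_add]
    exact hC' n _ _ (hmemIter m f v h)
  -- orbits stay in V
  have horbV : ∀ f v, (f, v) ∈ S → ∀ j : ℕ, R^[j] f ∈ V := fun f v h j =>
    hSV _ (hmemIter j f v h)
  -- continuity of R on V
  have hRcont : ∀ g ∈ V, ContinuousAt R g := by
    intro g hg
    have hfun : R = fun f => i (Rt f) := funext hR
    rw [hfun]
    exact i.continuous.continuousAt.comp (hdiff g hg).continuousAt
  -- continuity of DR on V
  have hDRcont : ∀ g ∈ V, ContinuousAt DR g := by
    intro g hg
    have h0 := fderiv_continuousAt_of_differentiable hV hdiff hg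
    have hfun : DR = fun f => (ContinuousLinearMap.compL ℂ B Bt B i) (DRt f) := by
      funext f; rw [hDR f]; rfl
    rw [hfun]
    exact ((ContinuousLinearMap.compL ℂ B Bt B i).continuous.continuousAt).comp h0
  -- continuity of iterates of R
  have hRiterCont : ∀ (n : ℕ) (g : B), (∀ j : ℕ, R^[j] g ∈ V) → ContinuousAt (R^[n]) g := by
    intro n
    induction n with
    | zero => intro g _; simpa using continuousAt_id
    | succ n ih =>
      intro g hg
      have hfun : (R^[n+1] : B → B) = fun f => R (R^[n] f) := by
        funext f; exact Function.iterate_succ_apply' R n f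
      rw [hfun]
      exact (hRcont _ (hg n)).comp (ih g hg)
  -- joint continuity of the iterated derivative
  have hφcont : ∀ (n : ℕ) (p : B × B), (∀ j : ℕ, R^[j] p.1 ∈ V) →
      ContinuousAt (fun q : B × B => iterDeriv R DR n q.1 q.2) p := by
    intro n
    induction n with
    | zero =>
      intro p _
      have : (fun q : B × B => iterDeriv R DR 0 q.1 q.2) = fun q : B × B => q.2 := rfl
      rw [this]
      exact continuous_snd.continuousAt
    | succ n ih =>
      intro p hp
      have hA : ContinuousAt (fun q : B × B => DR (R^[n] q.1)) p := by
        have h1' : ContinuousAt (fun q : B × B => R^[n] q.1) p :=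
          (hRiterCont n p.1 hp).comp continuous_fst.continuousAt
        exact ContinuousAt.comp (x := p) (g := DR)
          (f := fun q : B × B => R^[n] q.1) (hDRcont _ (hp n)) h1'

      have hB := ih p hp
      have : ContinuousAt ((fun r : (B →L[ℂ] B) × B => r.1 r.2) ∘
          (fun q : B × B => (DR (R^[n] q.1), iterDeriv R DR n q.1 q.2))) p :=
        (isBoundedBilinearMap_apply.continuous.continuousAt).comp (hA.prodMk hB)
      exact this
  -- compact absorbing set
  obtain ⟨Mb, hMb⟩ := h4.subset_closedBall 0
  set K1 : Set B := closure (i '' closedBall 0 Mb) with hK1def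
  have hK1 : IsCompact K1 := by
    have := hi.isCompact_closure_image_closedBall (𝕜₁ := ℂ) (f := (i : Bt →ₗ[ℂ] B)) Mb
    exact this
  set T : Set (B × B) := S ∩ (K1 ×ˢ K1) with hTdef
  have hTcomp : IsCompact T := (hK1.prod hK1).inter_left h2
  have hTmem : ∀ f v, (f, v) ∈ S → ‖v‖ ≤ 1 → (R f, DR f v) ∈ T := by
    intro f v hfv hnv
    refine ⟨h3 f v hfv, ?_, ?_⟩
    · have hmem : (Rt f, DRt f v) ∈ closedBall (0 : Bt × Bt) Mb :=
        hMb ⟨f, v, hfv, hnv, rfl⟩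
      have h1' : ‖Rt f‖ ≤ Mb :=
        le_trans (norm_fst_le (Rt f, DRt f v)) (by simpa using mem_closedBall_zero_iff.mp hmem)
      rw [hR f]
      exact subset_closure ⟨Rt f, mem_closedBall_zero_iff.mpr h1', rfl⟩
    · have hmem : (Rt f, DRt f v) ∈ closedBall (0 : Bt × Bt) Mb :=
        hMb ⟨f, v, hfv, hnv, rfl⟩
      have h2' : ‖DRt f v‖ ≤ Mb :=
        le_trans (norm_snd_le (Rt f, DRt f v)) (by simpa using mem_closedBall_zero_iff.mp hmem)
      have : DR f v = i (DRt f v) := by rw [hDR f]; rfl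
      rw [this]
      exact subset_closure ⟨DRt f v, mem_closedBall_zero_iff.mpr h2', rfl⟩
  -- the small constant
  set ε : ℝ := 1 / (2 * (C + 1)) with hεdef
  have hε : 0 < ε := by positivity
  -- choice of decay times
  have hex : ∀ p : B × B, p ∈ S → ∃ nn : ℕ, ‖iterDeriv R DR nn p.1 p.2‖ < ε := by
    intro p hp
    have h6' := h6 p.1 p.2 (by simpa using hp)
    exact (h6'.eventually_lt_const hε).exists
  set mfun : B × B → ℕ := fun p => if hp : p ∈ S then (hex p hp).choose else 0 with hmfundef
  have hmfun : ∀ p ∈ S, ‖iterDeriv R DR (mfun p) p.1 p.2‖ < ε := by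
    intro p hp
    have : mfun p = (hex p hp).choose := by rw [hmfundef]; simp [hp]
    rw [this]
    exact (hex p hp).choose_spec
  -- neighborhoods and finite subcover
  set U : B × B → Set (B × B) :=
    fun p => {q : B × B | ‖iterDeriv R DR (mfun p) q.1 q.2‖ < ε} with hUdef
  have hU : ∀ p ∈ T, U p ∈ 𝓝 p := by
    intro p hp
    have hps : p ∈ S := hp.1
    have hcont := (hφcont (mfun p) p (horbV p.1 p.2 (by simpa using hps))).norm
    exact hcont.preimage_mem_nhds (Iio_mem_nhds (hmfun p hps))
  obtain ⟨t, htT, hcover⟩ := hTcomp.elim_nhds_subcover U hU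
  set N0 : ℕ := t.sup mfun with hN0def
  have hTbound : ∀ q ∈ T, ‖iterDeriv R DR N0 q.1 q.2‖ ≤ C * ε := by
    intro q hq
    obtain ⟨x, hxt, hqx⟩ : ∃ x ∈ t, q ∈ U x := by
      simpa using Set.mem_iUnion₂.mp (hcover hq)
    have hxle : mfun x ≤ N0 := Finset.le_sup hxt
    have hsplit : N0 = mfun x + (N0 - mfun x) := (Nat.add_sub_cancel' hxle).symm
    rw [hsplit]
    calc ‖iterDeriv R DR (mfun x + (N0 - mfun x)) q.1 q.2‖
        ≤ C * ‖iterDeriv R DR (mfun x) q.1 q.2‖ := hquasi q.1 q.2 (by simpa using hq.1) _ _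
    _ ≤ C * ε := mul_le_mul_of_nonneg_left (le_of_lt hqx) hCpos.le
  refine ⟨C * ε, N0 + 1, ?_, ?_⟩
  · rw [hεdef, mul_one_div, div_lt_one (by positivity)]
    linarith
  · intro f _ v hfv hnv
    have hq := hTmem f v hfv hnv
    have hbb := hTbound _ hq
    have hsplit : iterDeriv R DR (N0 + 1) f v
        = iterDeriv R DR N0 (R^[1] f) (iterDeriv R DR 1 f v) := by
      rw [Nat.add_comm N0 1] at *
      exact iterDeriv_add R DR 1 N0 f v
    have h1v : iterDeriv R DR 1 f v = DR f v := by
      show DR (R^[0] f) ((ContinuousLinearMap.id ℂ B) v) = DR f v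
      simp
    rw [hsplit, h1v, Function.iterate_one]
    exact hbb
end

section
/- Let B be a complex Banach space and let T : B → B be a compact continuous linear operator such that Tⁿ v → 0 as n → ∞ for every v ∈ B. Then the spectral radius of T is strictly smaller than one. -/
open scoped Topology

theorem stmt1 {B : Type*} [NormedAddCommGroup B] [NormedSpace ℂ B] [CompleteSpace B]
    (T : B →L[ℂ] B) (hT : IsCompactOperator T)
    (h : ∀ v : B, Filter.Tendsto (fun n : ℕ => (T ^ n) v) Filter.atTop (𝓝 0)) :
    spectralRadius ℂ T < 1 := by
  -- Banach–Steinhaus: uniform bound on ‖T^n‖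
  obtain ⟨C0, hC0⟩ : ∃ C, ∀ n : ℕ, ‖T ^ n‖ ≤ C := by
    apply banach_steinhaus
    intro x
    obtain ⟨c, hc⟩ := ((h x).norm.bddAbove_range)
    exact ⟨c, fun n => hc ⟨n, rfl⟩⟩
  set C : ℝ := max C0 0 with hCdef
  have hC : ∀ n : ℕ, ‖T ^ n‖ ≤ C := fun n => (hC0 n).trans (le_max_left _ _)
  have hCnonneg : 0 ≤ C := le_max_right _ _
  -- Compactness: image of a small ball is contained in a compact set K
  obtain ⟨K, hK, hTK⟩ := hT
  obtain ⟨r, hr, hball⟩ := Metric.mem_nhds_iff.mp hTK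
  -- the key claim: some power has norm < 1
  obtain ⟨n, hn⟩ : ∃ n : ℕ, ‖T ^ (n + 1)‖ < 1 := by
    set δ : ℝ := r / 4 with hδdef
    have hδpos : 0 < δ := by positivity
    set δ' : ℝ := δ / (2 * (C + 1)) with hδ'def
    have hδ'pos : 0 < δ' := by positivity
    -- finite δ'-net of K
    obtain ⟨t, _, ht⟩ := hK.elim_nhds_subcover (fun x => Metric.ball x δ')
      (fun x _ => Metric.ball_mem_nhds x hδ'pos)
    -- choose N good for all points of the net
    have hev : ∀ᶠ n : ℕ in Filter.atTop, ∀ x ∈ t, ‖(T ^ n) x‖ ≤ δ / 2 := by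
      rw [Filter.eventually_all_finset]
      intro x _
      have hx0 : Filter.Tendsto (fun n : ℕ => ‖(T ^ n) x‖) Filter.atTop (𝓝 0) := by
        simpa using (h x).norm
      exact hx0.eventually_le_const (by positivity : (0 : ℝ) < δ / 2)
    obtain ⟨N, hN⟩ := hev.exists
    -- uniform smallness on K
    have hKsmall : ∀ y ∈ K, ‖(T ^ N) y‖ ≤ δ := by
      intro y hy
      obtain ⟨x, hxt, hyx⟩ := Set.mem_iUnion₂.mp (ht hy)
      have h1 : ‖(T ^ N) (y - x)‖ ≤ C * δ' := by
        calc ‖(T ^ N) (y - x)‖ ≤ ‖T ^ N‖ * ‖y - x‖ := (T ^ N).le_opNorm _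
          _ ≤ C * δ' := by
              apply mul_le_mul (hC N) _ (norm_nonneg _) hCnonneg
              exact (mem_ball_iff_norm.mp hyx).le
      have h2 : C * δ' ≤ δ / 2 := by
        have hfrac : C / (2 * (C + 1)) ≤ 1 / 2 := by
          rw [div_le_div_iff₀ (by positivity) (by norm_num)]
          nlinarith
        calc C * δ' = δ * (C / (2 * (C + 1))) := by rw [hδ'def]; ring
          _ ≤ δ * (1 / 2) := mul_le_mul_of_nonneg_left hfrac hδpos.le
          _ = δ / 2 := by ring
      calc ‖(T ^ N) y‖ = ‖(T ^ N) (y - x) + (T ^ N) x‖ := by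
            congr 1; rw [map_sub]; abel
        _ ≤ ‖(T ^ N) (y - x)‖ + ‖(T ^ N) x‖ := norm_add_le _ _
        _ ≤ δ / 2 + δ / 2 := add_le_add (h1.trans h2) (hN x hxt)
        _ = δ := by ring
    -- deduce the operator norm bound for T^(N+1)
    refine ⟨N, lt_of_le_of_lt (ContinuousLinearMap.opNorm_le_bound _ (by norm_num) ?_)
      (by norm_num : (1 : ℝ) / 2 < 1)⟩
    intro v
    rcases eq_or_ne v 0 with rfl | hv
    · simp
    · have hvn : 0 < ‖v‖ := norm_pos_iff.mpr hv
      set w : B := ((r / (2 * ‖v‖) : ℝ) : ℂ) • v with hwdef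
      have hwnorm : ‖w‖ = r / 2 := by
        rw [hwdef, norm_smul]
        simp only [Complex.norm_real, Real.norm_eq_abs]
        rw [abs_of_pos (by positivity)]
        field_simp
      have hwball : w ∈ Metric.ball (0 : B) r := by
        rw [Metric.mem_ball, dist_zero_right, hwnorm]
        linarith
      have hTw : T w ∈ K := hball hwball
      have hkey : ‖(T ^ N) (T w)‖ ≤ δ := hKsmall _ hTw
      have hTN : (T ^ N) (T w) = ((r / (2 * ‖v‖) : ℝ) : ℂ) • (T ^ (N + 1)) v := by
        rw [hwdef, map_smul, map_smul, pow_succ, ContinuousLinearMap.mul_apply]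
      rw [hTN, norm_smul] at hkey
      simp only [Complex.norm_real, Real.norm_eq_abs] at hkey
      rw [abs_of_pos (by positivity)] at hkey
      rw [hδdef, div_mul_eq_mul_div, div_le_iff₀ (by positivity : (0:ℝ) < 2 * ‖v‖)] at hkey
      nlinarith [hr, norm_nonneg ((T ^ (N + 1)) v)]
  -- conclude via Gelfand's formula bound
  have hle := spectrum.spectralRadius_le_pow_nnnorm_pow_one_div ℂ T n
  have hexp : (0 : ℝ) < 1 / (n + 1) := by positivity
  have h1 : (‖T ^ (n + 1)‖₊ : ENNReal) ^ (1 / (n + 1) : ℝ) < 1 := by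
    apply ENNReal.rpow_lt_one _ hexp
    rw [← ENNReal.coe_one, ENNReal.coe_lt_coe]
    exact_mod_cast hn
  have h2 : (‖(1 : B →L[ℂ] B)‖₊ : ENNReal) ^ (1 / (n + 1) : ℝ) ≤ 1 := by
    apply ENNReal.rpow_le_one _ hexp.le
    rw [← ENNReal.coe_one, ENNReal.coe_le_coe]
    exact_mod_cast ContinuousLinearMap.norm_id_le
  calc spectralRadius ℂ T ≤ _ := hle
    _ ≤ (‖T ^ (n + 1)‖₊ : ENNReal) ^ (1 / (n + 1) : ℝ) * 1 :=
        mul_le_mul_right h2 _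
    _ < 1 := by rwa [mul_one]
end

section
/- Let B be a complex Banach space and let T : B → B be a compact continuous linear operator such that Tⁿ v → 0 as n → ∞ for every v ∈ B. Then there exists N ∈ ℕ such that the operator norm of T^N is strictly smaller than one; consequently there exist constants C > 0 and λ < 1 with ‖Tⁿ‖ ≤ C λⁿ for all n ∈ ℕ. -/
open scoped Topology

theorem stmt2 {B : Type*} [NormedAddCommGroup B] [NormedSpace ℂ B] [CompleteSpace B]
    (T : B →L[ℂ] B) (hT : IsCompactOperator T)
    (h : ∀ v : B, Filter.Tendsto (fun n : ℕ => (T ^ n) v) Filter.atTop (𝓝 0)) :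
    (∃ N : ℕ, ‖T ^ N‖ < 1) ∧
      ∃ C > (0 : ℝ), ∃ lam : ℝ, lam < 1 ∧ ∀ n : ℕ, ‖T ^ n‖ ≤ C * lam ^ n := by
  -- uniform bound via Banach–Steinhaus
  obtain ⟨M, hM⟩ : ∃ M, ∀ n : ℕ, ‖T ^ n‖ ≤ M := by
    have := banach_steinhaus (g := fun n : ℕ => T ^ n) ?_
    · obtain ⟨C', hC'⟩ := this
      exact ⟨C', hC'⟩
    · intro x
      have ht : Filter.Tendsto (fun n : ℕ => ‖(T ^ n) x‖) Filter.atTop (𝓝 0) := by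
        simpa using (h x).norm
      obtain ⟨C, hC⟩ := ht.bddAbove_range
      exact ⟨C, fun n => hC ⟨n, rfl⟩⟩
  have hM0 : (0:ℝ) ≤ M := le_trans (norm_nonneg _) (hM 0)
  -- compact set containing T '' closedBall 0 1
  have hK : IsCompact (closure (T '' Metric.closedBall 0 1)) :=
    hT.isCompact_closure_image_closedBall 1
  set K := closure (T '' Metric.closedBall 0 1) with hKdef
  -- key: operator norms tend to 0
  have hnorm : Filter.Tendsto (fun n : ℕ => ‖T ^ (n + 1)‖) Filter.atTop (𝓝 0) := by
    rw [Metric.tendsto_atTop]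
    intro ε hε
    set δ : ℝ := ε / (2 * (M + 1)) with hδdef
    have hδ : 0 < δ := by positivity
    obtain ⟨t, htfin, htcov⟩ := (Metric.totallyBounded_iff.mp hK.totallyBounded) δ hδ
    -- eventually all points of the net are small
    have hev : ∀ᶠ n : ℕ in Filter.atTop, ∀ y ∈ t, ‖(T ^ n) y‖ < ε / 2 := by
      rw [htfin.eventually_all]
      intro y _
      have ht : Filter.Tendsto (fun n : ℕ => ‖(T ^ n) y‖) Filter.atTop (𝓝 0) := by
        simpa using (h y).norm
      exact ht.eventually_lt_const (by positivity)
    obtain ⟨n₀, hn₀⟩ := hev.exists_forall_of_atTop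
    refine ⟨n₀, fun n hn => ?_⟩
    have hnet : ∀ z ∈ K, ‖(T ^ n) z‖ ≤ ε / 2 + M * δ := by
      intro z hz
      obtain ⟨y, hyt, hyz⟩ := Set.mem_iUnion₂.mp (htcov hz)
      have h1 : ‖(T ^ n) (z - y)‖ ≤ M * δ := by
        calc ‖(T ^ n) (z - y)‖ ≤ ‖T ^ n‖ * ‖z - y‖ := (T ^ n).le_opNorm _
          _ ≤ M * δ := by
              apply mul_le_mul (hM n) _ (norm_nonneg _) hM0
              have : dist z y < δ := Metric.mem_ball.mp hyz
              rw [dist_eq_norm] at this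
              exact this.le
      have h2 : ‖(T ^ n) y‖ < ε / 2 := hn₀ n hn y hyt
      calc ‖(T ^ n) z‖ = ‖(T ^ n) (z - y) + (T ^ n) y‖ := by
            congr 1; rw [map_sub]; abel
        _ ≤ ‖(T ^ n) (z - y)‖ + ‖(T ^ n) y‖ := norm_add_le _ _
        _ ≤ M * δ + ε / 2 := add_le_add h1 h2.le
        _ = ε / 2 + M * δ := by ring
    have hop : ‖T ^ (n + 1)‖ ≤ ε / 2 + M * δ := by
      apply ContinuousLinearMap.opNorm_le_bound _ (by positivity)
      intro x
      rcases eq_or_ne x 0 with rfl | hx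
      · simp
      · have hxn : (0:ℝ) < ‖x‖ := norm_pos_iff.mpr hx
        set y : B := ((‖x‖ : ℂ))⁻¹ • x with hy
        have hyb : y ∈ Metric.closedBall (0:B) 1 := by
          simp only [hy, Metric.mem_closedBall, dist_zero_right, norm_smul, norm_inv,
            Complex.norm_real, Real.norm_eq_abs, abs_of_pos hxn]
          rw [inv_mul_cancel₀ hxn.ne']
        have hTy : T y ∈ K := subset_closure ⟨y, hyb, rfl⟩
        have hb := hnet (T y) hTy
        have hxy : x = ((‖x‖ : ℂ)) • y := by
          rw [hy, smul_smul, mul_inv_cancel₀ (by exact_mod_cast hxn.ne'), one_smul]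
        calc ‖(T ^ (n + 1)) x‖ = ‖(T ^ (n + 1)) (((‖x‖ : ℂ)) • y)‖ := by rw [← hxy]
          _ = ‖x‖ * ‖(T ^ (n + 1)) y‖ := by
              rw [map_smul, norm_smul, Complex.norm_real, Real.norm_eq_abs, abs_of_pos hxn]
          _ = ‖x‖ * ‖(T ^ n) (T y)‖ := by
              rw [pow_succ, ContinuousLinearMap.mul_apply]
          _ ≤ ‖x‖ * (ε / 2 + M * δ) := by
              exact mul_le_mul_of_nonneg_left hb hxn.le
          _ = (ε / 2 + M * δ) * ‖x‖ := by ring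
    rw [Real.dist_eq, sub_zero, abs_of_nonneg (norm_nonneg _)]
    calc ‖T ^ (n + 1)‖ ≤ ε / 2 + M * δ := hop
      _ < ε / 2 + ε / 2 := by
          apply (add_lt_add_iff_left _).mpr
          rw [hδdef]
          rw [div_eq_mul_inv]
          have : M * (ε * (2 * (M + 1))⁻¹) < (M + 1) * (ε * (2 * (M + 1))⁻¹) := by
            apply mul_lt_mul_of_pos_right (by linarith) (by positivity)
          calc M * (ε * (2 * (M + 1))⁻¹) < (M + 1) * (ε * (2 * (M + 1))⁻¹) := this
            _ = ε / 2 := by field_simp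
      _ = ε := by ring
  -- pick N with small norm
  obtain ⟨n₀, hn₀⟩ := (Metric.tendsto_atTop.mp hnorm) (1/2) (by norm_num)
  set N : ℕ := n₀ + 1 with hNdef
  have hN1 : 1 ≤ N := Nat.le_add_left 1 n₀
  have hTN : ‖T ^ N‖ < 1 / 2 := by
    have := hn₀ n₀ le_rfl
    rwa [Real.dist_eq, sub_zero, abs_of_nonneg (norm_nonneg _)] at this
  constructor
  · exact ⟨N, hTN.trans (by norm_num)⟩
  · -- geometric decay
    set lam : ℝ := 1 - 1 / (2 * N) with hlamdef
    have hNpos : (0:ℝ) < N := by exact_mod_cast Nat.lt_of_lt_of_le Nat.zero_lt_one hN1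
    have hlam_lt : lam < 1 := by
      rw [hlamdef]
      have : (0:ℝ) < 1 / (2 * N) := by positivity
      linarith
    have hN1' : (1:ℝ) ≤ N := by exact_mod_cast hN1
    have hlam_half : (1:ℝ)/2 ≤ lam := by
      rw [hlamdef]
      have h2N : (2:ℝ) ≤ 2 * N := by linarith
      have : 1 / (2 * (N:ℝ)) ≤ 1 / 2 := by
        apply div_le_div_of_nonneg_left (by norm_num) (by norm_num) h2N
      linarith
    have hlam_pos : (0:ℝ) < lam := lt_of_lt_of_le (by norm_num) hlam_half
    have hlamN : (1:ℝ)/2 ≤ lam ^ N := by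
      have hb : (-2:ℝ) ≤ -(1 / (2 * N)) := by
        have : 1 / (2 * (N:ℝ)) ≤ 1 / 2 := by
          apply div_le_div_of_nonneg_left (by norm_num) (by norm_num) (by linarith)
        linarith
      have := one_add_mul_le_pow hb N
      have heq : (1 + -(1 / (2 * (N:ℝ)))) = lam := by rw [hlamdef]; ring
      rw [heq] at this
      have hNc : (N:ℝ) * (1 / (2 * N)) = 1 / 2 := by
        field_simp
      calc (1:ℝ)/2 = 1 + (N:ℝ) * -(1 / (2 * N)) := by rw [mul_neg, hNc]; ring
        _ ≤ lam ^ N := this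
    refine ⟨2 * (M + 1), by positivity, lam, hlam_lt, fun n => ?_⟩
    -- write n = N * (n / N) + n % N
    obtain ⟨q, r, hr, hn⟩ : ∃ q r, r < N ∧ n = N * q + r :=
      ⟨n / N, n % N, Nat.mod_lt _ (by omega), (Nat.div_add_mod n N).symm⟩
    have hpowle : ∀ (S : B →L[ℂ] B) (k : ℕ), ‖S ^ k‖ ≤ ‖S‖ ^ k := by
      intro S k
      induction k with
      | zero => simp only [pow_zero]; exact ContinuousLinearMap.norm_id_le
      | succ k ih =>
          calc ‖S ^ (k + 1)‖ = ‖S ^ k * S‖ := by rw [pow_succ]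
            _ ≤ ‖S ^ k‖ * ‖S‖ := norm_mul_le _ _
            _ ≤ ‖S‖ ^ k * ‖S‖ := mul_le_mul_of_nonneg_right ih (norm_nonneg _)
            _ = ‖S‖ ^ (k + 1) := (pow_succ _ _).symm
    have key : ‖T ^ n‖ ≤ ‖T ^ N‖ ^ q * M := by
      calc ‖T ^ n‖ = ‖(T ^ N) ^ q * T ^ r‖ := by rw [hn, pow_add, pow_mul]
        _ ≤ ‖(T ^ N) ^ q‖ * ‖T ^ r‖ := norm_mul_le _ _
        _ ≤ ‖T ^ N‖ ^ q * M :=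
            mul_le_mul (hpowle _ _) (hM r) (norm_nonneg _) (by positivity)
    have h1 : ‖T ^ N‖ ^ q ≤ lam ^ (N * q) := by
      rw [pow_mul]
      apply pow_le_pow_left₀ (norm_nonneg _)
      exact le_trans hTN.le (by linarith [hlamN])
    have h2 : lam ^ (N * q) ≤ 2 * lam ^ n := by
      have hrle : lam ^ N ≤ lam ^ r := pow_le_pow_of_le_one hlam_pos.le hlam_lt.le hr.le
      have : lam ^ n = lam ^ (N * q) * lam ^ r := by rw [hn, pow_add]
      nlinarith [pow_pos hlam_pos (N * q), pow_pos hlam_pos r, pow_pos hlam_pos n]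
    calc ‖T ^ n‖ ≤ ‖T ^ N‖ ^ q * M := key
      _ ≤ lam ^ (N * q) * M := mul_le_mul_of_nonneg_right h1 hM0
      _ ≤ 2 * lam ^ n * M := mul_le_mul_of_nonneg_right h2 hM0
      _ ≤ 2 * (M + 1) * lam ^ n := by nlinarith [pow_pos hlam_pos n]
end

section
/- Let B be a complex Banach space and let T : B → B be a continuous linear operator that factors as T = i ∘ T̃, where T̃ : B → B̃ is a continuous linear operator into a complex Banach space B̃ and i : B̃ → B is a compact continuous linear map. Let F ⊆ B be a closed linear subspace with T(F) ⊆ F, and assume that sup_n sup{‖Tⁿ v‖ : v ∈ F, ‖v‖ ≤ 1} < ∞ and that Tⁿ v → 0 as n → ∞ for every v ∈ F. Then there exist N ∈ ℕ and λ < 1 such that sup{‖T^N v‖ : v ∈ F, ‖v‖ ≤ 1} ≤ λ. -/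
open scoped Topology

theorem stmt4 {B Bt : Type*}
    [NormedAddCommGroup B] [NormedSpace ℂ B] [CompleteSpace B]
    [NormedAddCommGroup Bt] [NormedSpace ℂ Bt] [CompleteSpace Bt]
    (T : B →L[ℂ] B) (Tt : B →L[ℂ] Bt) (i : Bt →L[ℂ] B)
    (hi : IsCompactOperator i)
    (hfact : T = i.comp Tt)
    (F : Submodule ℂ B) (hFclosed : IsClosed (F : Set B))
    (hTF : ∀ v ∈ F, T v ∈ F)
    (hbound : ∃ M : ℝ, ∀ n : ℕ, ∀ v ∈ F, ‖v‖ ≤ 1 → ‖(T ^ n) v‖ ≤ M)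
    (hdecay : ∀ v ∈ F, Filter.Tendsto (fun n : ℕ => (T ^ n) v) Filter.atTop (𝓝 0)) :
    ∃ (N : ℕ) (lam : ℝ), lam < 1 ∧ ∀ v ∈ F, ‖v‖ ≤ 1 → ‖(T ^ N) v‖ ≤ lam := by
  obtain ⟨M, hM⟩ := hbound
  have hM0 : 0 ≤ M := le_trans (norm_nonneg _) (hM 0 0 F.zero_mem (by simp))
  -- operator-norm-type bound on F
  have hlip : ∀ n : ℕ, ∀ u ∈ F, ‖(T ^ n) u‖ ≤ M * ‖u‖ := by
    intro n u hu
    rcases eq_or_ne u 0 with rfl | hu0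
    · simp
    · have hnorm : (0:ℝ) < ‖u‖ := norm_pos_iff.mpr hu0
      have h1 : ‖((‖u‖ : ℂ)⁻¹ • u)‖ = 1 := by
        rw [norm_smul, norm_inv, Complex.norm_real, Real.norm_of_nonneg hnorm.le]
        field_simp
      have h2 := hM n ((‖u‖ : ℂ)⁻¹ • u) (F.smul_mem _ hu) h1.le
      rw [map_smul, norm_smul, norm_inv, Complex.norm_real,
        Real.norm_of_nonneg hnorm.le] at h2
      calc ‖(T ^ n) u‖ = ‖u‖ * (‖u‖⁻¹ * ‖(T ^ n) u‖) := by field_simp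
        _ ≤ ‖u‖ * M := by
            exact mul_le_mul_of_nonneg_left h2 hnorm.le
        _ = M * ‖u‖ := mul_comm _ _
  -- the image of the unit ball of F under T is totally bounded
  set S : Set B := T '' ((F : Set B) ∩ Metric.closedBall 0 1) with hSdef
  have hSsub : S ⊆ (F : Set B) := by
    rintro _ ⟨v, ⟨hvF, _⟩, rfl⟩; exact hTF v hvF
  have hStb : TotallyBounded S := by
    have hb : Bornology.IsBounded (Tt '' ((F : Set B) ∩ Metric.closedBall 0 1)) :=
      (Tt.lipschitz.isBounded_image
        (Metric.isBounded_closedBall.subset Set.inter_subset_right))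
    have hK : IsCompact (closure (i '' (Tt '' ((F : Set B) ∩ Metric.closedBall 0 1)))) :=
      hi.isCompact_closure_image_of_bounded hb
    have hSeq : S = i '' (Tt '' ((F : Set B) ∩ Metric.closedBall 0 1)) := by
      rw [hSdef, hfact, ← Set.image_comp]; rfl
    exact (hK.totallyBounded.subset subset_closure).subset hSeq.le
  -- choose ε and a finite ε-net inside S
  have hMpos : (0:ℝ) < 3 * (M + 1) := by linarith
  set ε : ℝ := 1 / (3 * (M + 1)) with hεdef
  have hε : 0 < ε := by positivity
  obtain ⟨t, hts, htfin, hcov⟩ :=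
    totallyBounded_iff_subset.mp hStb {p : B × B | dist p.1 p.2 < ε}
      (Metric.dist_mem_uniformity hε)
  -- choose n making T^n small on the net
  have hev : ∀ᶠ n in Filter.atTop, ∀ w ∈ t, ‖(T ^ n) w‖ ≤ 1/3 := by
    rw [htfin.eventually_all]
    intro w hw
    have hwF : w ∈ F := hSsub (hts hw)
    have := (hdecay w hwF).norm
    simp only [norm_zero] at this
    exact this.eventually_le_const (by norm_num)
  obtain ⟨n, hn⟩ := hev.exists
  refine ⟨n + 1, 2/3, by norm_num, ?_⟩
  intro v hvF hv1
  have hTvS : T v ∈ S := ⟨v, ⟨hvF, by simpa using hv1⟩, rfl⟩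
  obtain ⟨y, hyt, hdy⟩ : ∃ y ∈ t, dist (T v) y < ε := by
    simpa using hcov hTvS
  have hdist : ‖T v - y‖ < ε := by rwa [← dist_eq_norm]
  have hyF : y ∈ F := hSsub (hts hyt)
  have hkey : (T ^ (n + 1)) v = (T ^ n) (T v) := by
    rw [pow_succ]; rfl
  have hsubmem : T v - y ∈ F := F.sub_mem (hTF v hvF) hyF
  calc ‖(T ^ (n+1)) v‖ = ‖(T ^ n) (T v - y) + (T ^ n) y‖ := by
        rw [hkey, map_sub]; rw [sub_add_cancel]
    _ ≤ ‖(T ^ n) (T v - y)‖ + ‖(T ^ n) y‖ := norm_add_le _ _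
    _ ≤ M * ‖T v - y‖ + 1/3 := add_le_add (hlip n _ hsubmem) (hn y hyt)
    _ ≤ M * ε + 1/3 := by nlinarith [hlip n (T v - y) hsubmem, norm_nonneg (T v - y)]
    _ ≤ 2/3 := by
        have : M * ε ≤ 1/3 := by
          rw [hεdef]
          rw [mul_one_div, div_le_div_iff₀ hMpos (by norm_num)]
          nlinarith
        linarith
end
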